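/- Let t ≥ 0 and let G be a simple graph on n vertices containing no t+2 pairwise vertex-disjoint triangles. Let M be a family of t+1 pairwise vertex-disjoint triangles in G, let D be the induced subgraph of G on the vertices not covered by M (so |V(D)| = n − 3(t+1)), let 𝓜 be a matching in D, and let A be the set of triangles of M that contain a vertex friendly in G with at least two distinct edges of 𝓜, with a = |A|. Then the number of edges of G with one endpoint in V(A) and the other in V(D) is at most 2a(n − 3(t+1)). -/

import Mathlib

def HasIndepTriangles {V : Type*} (G : SimpleGraph V) (k : ℕ) : Prop :=
  ∃ f : Fin k → Fin 3 → V,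
    Function.Injective (fun p : Fin k × Fin 3 => f p.1 p.2) ∧
    ∀ i, G.Adj (f i 0) (f i 1) ∧ G.Adj (f i 1) (f i 2) ∧ G.Adj (f i 0) (f i 2)
def Friendly {V : Type*} (G : SimpleGraph V) (w : V) (e : Sym2 V) : Prop :=
  ∀ x ∈ e, G.Adj w x
def IsMatchingOn {V : Type*} (G : SimpleGraph V) (S : Set V) (F : Finset (Sym2 V)) : Prop :=
  (∀ e ∈ F, e ∈ G.edgeSet ∧ ∀ x ∈ e, x ∈ S) ∧
  ((F : Set (Sym2 V)).Pairwise fun e f => ∀ v, v ∈ e → v ∉ f)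

lemma aux_extend {t : ℕ} {V : Type*} {G : SimpleGraph V}
    {f : Fin (t + 1) → Fin 3 → V}
    (hinj : Function.Injective fun p : Fin (t + 1) × Fin 3 => f p.1 p.2)
    (htri : ∀ i, G.Adj (f i 0) (f i 1) ∧ G.Adj (f i 1) (f i 2) ∧ G.Adj (f i 0) (f i 2))
    (i : Fin (t + 1)) (T1 T2 : Fin 3 → V)
    (h12 : ∀ j j', T1 j ≠ T2 j')
    (h1 : Function.Injective T1) (h2 : Function.Injective T2)
    (hold1 : ∀ k j j', k ≠ i → f k j ≠ T1 j')
    (hold2 : ∀ k j j', k ≠ i → f k j ≠ T2 j')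
    (ht1 : G.Adj (T1 0) (T1 1) ∧ G.Adj (T1 1) (T1 2) ∧ G.Adj (T1 0) (T1 2))
    (ht2 : G.Adj (T2 0) (T2 1) ∧ G.Adj (T2 1) (T2 2) ∧ G.Adj (T2 0) (T2 2)) :
    HasIndepTriangles G (t + 2) := by
  classical
  have hf : ∀ k j k' j', f k j = f k' j' → k = k' ∧ j = j' := by
    intro k j k' j' h
    have := hinj (a₁ := (k, j)) (a₂ := (k', j')) h
    exact ⟨congrArg Prod.fst this, congrArg Prod.snd this⟩
  refine ⟨Fin.snoc (Function.update f i T1) T2, ?_, ?_⟩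
  · rintro ⟨k, j⟩ ⟨k', j'⟩ h
    simp only at h
    rcases Fin.eq_castSucc_or_eq_last k with ⟨k, rfl⟩ | rfl <;>
      rcases Fin.eq_castSucc_or_eq_last k' with ⟨k', rfl⟩ | rfl
    · rw [Fin.snoc_castSucc, Fin.snoc_castSucc] at h
      by_cases hk : k = i <;> by_cases hk' : k' = i
      · subst hk; subst hk'
        rw [Function.update_self] at h
        rw [h1 h]
      · subst hk
        rw [Function.update_self, Function.update_of_ne hk'] at h
        exact absurd h.symm (hold1 k' j' j hk')
      · subst hk'
        rw [Function.update_self, Function.update_of_ne hk] at h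
        exact absurd h (hold1 k j j' hk)
      · rw [Function.update_of_ne hk, Function.update_of_ne hk'] at h
        obtain ⟨rfl, rfl⟩ := hf _ _ _ _ h
        rfl
    · rw [Fin.snoc_castSucc, Fin.snoc_last] at h
      by_cases hk : k = i
      · subst hk; rw [Function.update_self] at h
        exact absurd h (h12 j j')
      · rw [Function.update_of_ne hk] at h
        exact absurd h (hold2 k j j' hk)
    · rw [Fin.snoc_last, Fin.snoc_castSucc] at h
      by_cases hk : k' = i
      · subst hk; rw [Function.update_self] at h
        exact absurd h.symm (h12 j' j)
      · rw [Function.update_of_ne hk] at h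
        exact absurd h.symm (hold2 k' j' j hk)
    · rw [Fin.snoc_last] at h
      rw [h2 h]
  · intro k
    rcases Fin.eq_castSucc_or_eq_last k with ⟨k, rfl⟩ | rfl
    · rw [Fin.snoc_castSucc]
      by_cases hk : k = i
      · subst hk; rw [Function.update_self]; exact ht1
      · rw [Function.update_of_ne hk]; exact htri k
    · rw [Fin.snoc_last]; exact ht2


lemma core_no_three {t n : ℕ} {G : SimpleGraph (Fin n)}
    (hG : ¬ HasIndepTriangles G (t + 2))
    {f : Fin (t + 1) → Fin 3 → Fin n}
    (hinj : Function.Injective fun p : Fin (t + 1) × Fin 3 => f p.1 p.2)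
    (htri : ∀ i, G.Adj (f i 0) (f i 1) ∧ G.Adj (f i 1) (f i 2) ∧ G.Adj (f i 0) (f i 2))
    {Dset : Set (Fin n)} (hDset : Dset = {x | ∀ i j, f i j ≠ x})
    {F : Finset (Sym2 (Fin n))} (hF : IsMatchingOn G Dset F)
    (i : Fin (t + 1)) (jx : Fin 3) {e₁ e₂ : Sym2 (Fin n)}
    (he₁ : e₁ ∈ F) (he₂ : e₂ ∈ F) (hne : e₁ ≠ e₂)
    (fr1 : Friendly G (f i jx) e₁) (fr2 : Friendly G (f i jx) e₂)
    {d : Fin n} (hd : d ∈ Dset) (hall : ∀ j, G.Adj (f i j) d) : False := by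
  classical
  have hf : ∀ k j k' j', f k j = f k' j' → k = k' ∧ j = j' := by
    intro k j k' j' h
    have := hinj (a₁ := (k, j)) (a₂ := (k', j')) h
    exact ⟨congrArg Prod.fst this, congrArg Prod.snd this⟩
  have hDmem : ∀ x ∈ Dset, ∀ k j, f k j ≠ x := by
    intro x hx; rw [hDset] at hx; exact hx
  obtain ⟨e, heF, fr, hde⟩ : ∃ e ∈ F, Friendly G (f i jx) e ∧ d ∉ e := by
    by_cases hd1 : d ∈ e₁
    · exact ⟨e₂, he₂, fr2, hF.2 (Finset.mem_coe.mpr he₁) (Finset.mem_coe.mpr he₂) hne d hd1⟩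
    · exact ⟨e₁, he₁, fr1, hd1⟩
  obtain ⟨a, b, rfl⟩ : ∃ a b, e = s(a, b) := by
    induction e using Sym2.ind with | _ a b => exact ⟨a, b, rfl⟩
  have hadjab : G.Adj a b := (hF.1 _ heF).1
  have haD : a ∈ Dset := (hF.1 _ heF).2 a (by simp)
  have hbD : b ∈ Dset := (hF.1 _ heF).2 b (by simp)
  have hda : d ≠ a := fun h => hde (by simp [h])
  have hdb : d ≠ b := fun h => hde (by simp [h])
  have fra : G.Adj (f i jx) a := fr a (by simp)
  have frb : G.Adj (f i jx) b := fr b (by simp)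
  have fa : ∀ k j, f k j ≠ a := hDmem a haD
  have fb : ∀ k j, f k j ≠ b := hDmem b hbD
  have fd : ∀ k j, f k j ≠ d := hDmem d hd
  have hfi : ∀ j j' : Fin 3, f i j = f i j' → j = j' := fun j j' h => (hf i j i j' h).2
  have hj : ∀ j : Fin 3, j ≠ j + 1 ∧ j ≠ j + 2 ∧ j + 1 ≠ j + 2 := by decide
  have hpair : ∀ j j' : Fin 3, j ≠ j' → G.Adj (f i j) (f i j') := by
    obtain ⟨h01, h12', h02⟩ := htri i
    intro j j' hjj'
    fin_cases j <;> fin_cases j' <;>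
      first
        | exact absurd rfl hjj'
        | exact h01 | exact h12' | exact h02
        | exact h01.symm | exact h12'.symm | exact h02.symm
  refine hG (aux_extend hinj htri i ![f i jx, a, b] ![f i (jx+1), f i (jx+2), d]
    ?_ ?_ ?_ ?_ ?_ ?_ ?_)
  · intro j j'
    fin_cases j <;> fin_cases j' <;>
      simp only [Fin.mk_zero, Fin.mk_one, Matrix.cons_val_zero, Matrix.cons_val_one, Matrix.head_cons,
        Matrix.cons_val_two, Matrix.tail_cons, Fin.reduceFinMk] <;>
      first
        | exact fun h => (hj jx).1 (hfi _ _ h)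
        | exact fun h => (hj jx).2.1 (hfi _ _ h)
        | exact fd _ _
        | exact Ne.symm (fa _ _)
        | exact Ne.symm (fb _ _)
        | exact hda.symm
        | exact hdb.symm
  · intro j j' h
    fin_cases j <;> fin_cases j' <;>
      simp only [Fin.mk_zero, Fin.mk_one, Matrix.cons_val_zero, Matrix.cons_val_one, Matrix.head_cons,
        Matrix.cons_val_two, Matrix.tail_cons, Fin.reduceFinMk] at h <;>
      first
        | rfl
        | exact absurd h (fa _ _)
        | exact absurd h.symm (fa _ _)
        | exact absurd h (fb _ _)
        | exact absurd h.symm (fb _ _)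
        | exact absurd h hadjab.ne
        | exact absurd h.symm hadjab.ne
  · intro j j' h
    fin_cases j <;> fin_cases j' <;>
      simp only [Fin.mk_zero, Fin.mk_one, Matrix.cons_val_zero, Matrix.cons_val_one, Matrix.head_cons,
        Matrix.cons_val_two, Matrix.tail_cons, Fin.reduceFinMk] at h <;>
      first
        | rfl
        | exact absurd (hfi _ _ h) (hj jx).2.2
        | exact absurd (hfi _ _ h) (Ne.symm (hj jx).2.2)
        | exact absurd h (fd _ _)
        | exact absurd h.symm (fd _ _)
  · intro k j j' hk
    fin_cases j' <;>
      simp only [Fin.mk_zero, Fin.mk_one, Matrix.cons_val_zero, Matrix.cons_val_one, Matrix.head_cons,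
        Matrix.cons_val_two, Matrix.tail_cons, Fin.reduceFinMk] <;>
      first
        | exact fun h => hk (hf _ _ _ _ h).1
        | exact fa _ _
        | exact fb _ _
  · intro k j j' hk
    fin_cases j' <;>
      simp only [Fin.mk_zero, Fin.mk_one, Matrix.cons_val_zero, Matrix.cons_val_one, Matrix.head_cons,
        Matrix.cons_val_two, Matrix.tail_cons, Fin.reduceFinMk] <;>
      first
        | exact fun h => hk (hf _ _ _ _ h).1
        | exact fd _ _
  · refine ⟨?_, ?_, ?_⟩ <;>
      simp only [Fin.mk_zero, Fin.mk_one, Matrix.cons_val_zero, Matrix.cons_val_one, Matrix.head_cons,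
        Matrix.cons_val_two, Matrix.tail_cons, Fin.reduceFinMk]
    · exact fra
    · exact hadjab
    · exact frb
  · refine ⟨?_, ?_, ?_⟩ <;>
      simp only [Fin.mk_zero, Fin.mk_one, Matrix.cons_val_zero, Matrix.cons_val_one, Matrix.head_cons,
        Matrix.cons_val_two, Matrix.tail_cons, Fin.reduceFinMk]
    · exact hpair _ _ (hj jx).2.2
    · exact hall _
    · exact hall _

theorem edges_A_to_D_bound (t n : ℕ) (G : SimpleGraph (Fin n))
    (hG : ¬ HasIndepTriangles G (t + 2))
    (f : Fin (t + 1) → Fin 3 → Fin n)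
    (hinj : Function.Injective fun p : Fin (t + 1) × Fin 3 => f p.1 p.2)
    (htri : ∀ i, G.Adj (f i 0) (f i 1) ∧ G.Adj (f i 1) (f i 2) ∧ G.Adj (f i 0) (f i 2))
    (Dset : Set (Fin n)) (hDset : Dset = {x | ∀ i j, f i j ≠ x})
    (F : Finset (Sym2 (Fin n))) (hF : IsMatchingOn G Dset F)
    (A : Finset (Fin (t + 1)))
    (hA : ∀ i, i ∈ A ↔ ∃ j : Fin 3, ∃ e₁ ∈ F, ∃ e₂ ∈ F,
      e₁ ≠ e₂ ∧ Friendly G (f i j) e₁ ∧ Friendly G (f i j) e₂) :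
    (Set.ncard {e | e ∈ G.edgeSet ∧ ∃ u v : Fin n, e = s(u, v) ∧
        (∃ i ∈ A, ∃ j, f i j = u) ∧ v ∈ Dset} : ℤ) ≤
      2 * A.card * ((n : ℤ) - 3 * (t + 1)) := by
  classical
  have key : ∀ i ∈ A, ∀ d ∈ Dset, ∃ j : Fin 3, ¬ G.Adj (f i j) d := by
    intro i hi d hd
    by_contra hcon
    push_neg at hcon
    obtain ⟨jx, e₁, he₁, e₂, he₂, hne, fr1, fr2⟩ := (hA i).mp hi
    exact core_no_three hG hinj htri hDset hF i jx he₁ he₂ hne fr1 fr2 hd hcon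
  set D' : Finset (Fin n) := Finset.univ.filter (· ∈ Dset) with hD'
  have h3n : (t + 1) * 3 ≤ n := by
    have := Fintype.card_le_of_injective _ hinj
    simpa using this
  have hDcard : (D'.card : ℤ) ≤ (n : ℤ) - 3 * (t + 1) := by
    have hsub : D' ⊆ (Finset.image (fun p : Fin (t+1) × Fin 3 => f p.1 p.2) Finset.univ)ᶜ := by
      intro x hx
      rw [hD', Finset.mem_filter] at hx
      have hx2 := hx.2
      rw [hDset] at hx2
      simp only [Finset.mem_compl, Finset.mem_image, not_exists, not_and]
      rintro ⟨i, j⟩ - h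
      exact hx2 i j h
    have hci : (Finset.image (fun p : Fin (t+1) × Fin 3 => f p.1 p.2) Finset.univ).card
        = (t + 1) * 3 := by
      rw [Finset.card_image_of_injective _ hinj]
      simp
    have hle := Finset.card_le_card hsub
    rw [Finset.card_compl, hci] at hle
    have : D'.card ≤ n - (t + 1) * 3 := by simpa using hle
    have hcast : (D'.card : ℤ) ≤ (n : ℤ) - (t + 1) * 3 := by
      have := Nat.cast_le (α := ℤ) |>.mpr this
      rwa [Nat.cast_sub h3n] at this
    push_cast at hcast ⊢
    linarith
  set T : Finset (Fin (t+1) × Fin 3 × Fin n) :=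
    Finset.univ.filter (fun p => p.1 ∈ A ∧ p.2.2 ∈ Dset ∧ G.Adj (f p.1 p.2.1) p.2.2) with hT
  have hS1 : Set.ncard {e | e ∈ G.edgeSet ∧ ∃ u v : Fin n, e = s(u, v) ∧
      (∃ i ∈ A, ∃ j, f i j = u) ∧ v ∈ Dset} ≤ T.card := by
    have hsubS : {e | e ∈ G.edgeSet ∧ ∃ u v : Fin n, e = s(u, v) ∧
        (∃ i ∈ A, ∃ j, f i j = u) ∧ v ∈ Dset}
        ⊆ ↑(T.image fun p : Fin (t+1) × Fin 3 × Fin n => s(f p.1 p.2.1, p.2.2)) := by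
      rintro e ⟨heE, u, v, rfl, ⟨i, hiA, j, rfl⟩, hv⟩
      refine Finset.mem_coe.mpr (Finset.mem_image.mpr ⟨(i, j, v), ?_, rfl⟩)
      exact Finset.mem_filter.mpr ⟨Finset.mem_univ _, hiA, hv, heE⟩
    calc Set.ncard {e | e ∈ G.edgeSet ∧ ∃ u v : Fin n, e = s(u, v) ∧
          (∃ i ∈ A, ∃ j, f i j = u) ∧ v ∈ Dset}
        ≤ Set.ncard ↑(T.image fun p : Fin (t+1) × Fin 3 × Fin n => s(f p.1 p.2.1, p.2.2)) :=
          Set.ncard_le_ncard hsubS (Finset.finite_toSet _)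
      _ = (T.image fun p : Fin (t+1) × Fin 3 × Fin n => s(f p.1 p.2.1, p.2.2)).card :=
          Set.ncard_coe_finset _
      _ ≤ T.card := Finset.card_image_le
  have hTb : T.card ≤ 2 * (A.card * D'.card) := by
    have hfib : ∀ b ∈ T.image (fun p : Fin (t+1) × Fin 3 × Fin n => (p.1, p.2.2)),
        (T.filter (fun p => (p.1, p.2.2) = b)).card ≤ 2 := by
      rintro ⟨i, d⟩ hb
      obtain ⟨p, hp, hpb⟩ := Finset.mem_image.mp hb
      rw [hT, Finset.mem_filter] at hp
      obtain ⟨hp1, hpd⟩ : p.1 = i ∧ p.2.2 = d :=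
        ⟨congrArg Prod.fst hpb, congrArg Prod.snd hpb⟩
      have hiA : i ∈ A := hp1 ▸ hp.2.1
      have hdD : d ∈ Dset := hpd ▸ hp.2.2.1
      have hJ : (Finset.univ.filter (fun j : Fin 3 => G.Adj (f i j) d)).card ≤ 2 := by
        obtain ⟨j0, hj0⟩ := key i hiA d hdD
        have hss : Finset.univ.filter (fun j : Fin 3 => G.Adj (f i j) d) ⊂ Finset.univ := by
          refine Finset.ssubset_univ_iff.mpr ?_
          intro hEq
          have hmem : j0 ∈ Finset.univ.filter (fun j : Fin 3 => G.Adj (f i j) d) := by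
            rw [hEq]; exact Finset.mem_univ j0
          exact hj0 (Finset.mem_filter.mp hmem).2
        have hlt := Finset.card_lt_card hss
        simp only [Finset.card_univ, Fintype.card_fin] at hlt
        omega
      refine le_trans (Finset.card_le_card_of_injOn (fun p => p.2.1) ?_ ?_) hJ
      · intro q hq
        rw [Finset.mem_coe, Finset.mem_filter] at hq
        obtain ⟨hqT, hqb⟩ := hq
        rw [hT, Finset.mem_filter] at hqT
        have hq1 : q.1 = i := congrArg Prod.fst hqb
        have hq2 : q.2.2 = d := congrArg Prod.snd hqb
        refine Finset.mem_coe.mpr (Finset.mem_filter.mpr ⟨Finset.mem_univ _, ?_⟩)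
        rw [← hq1, ← hq2]
        exact hqT.2.2.2
      · intro q hq q' hq' hqq
        have hq := Finset.mem_filter.mp (Finset.mem_coe.mp hq)
        have hq' := Finset.mem_filter.mp (Finset.mem_coe.mp hq')
        have h1 : q.1 = q'.1 := by
          rw [congrArg Prod.fst hq.2, congrArg Prod.fst hq'.2]
        have h2 : q.2.2 = q'.2.2 := by
          rw [congrArg Prod.snd hq.2, congrArg Prod.snd hq'.2]
        exact Prod.ext h1 (Prod.ext hqq h2)
    have h := Finset.card_le_mul_card_image
      (f := fun p : Fin (t+1) × Fin 3 × Fin n => (p.1, p.2.2)) T 2 hfib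
    have him : T.image (fun p : Fin (t+1) × Fin 3 × Fin n => (p.1, p.2.2)) ⊆ A ×ˢ D' := by
      intro b hb
      obtain ⟨p, hp, rfl⟩ := Finset.mem_image.mp hb
      rw [hT, Finset.mem_filter] at hp
      refine Finset.mem_product.mpr ⟨hp.2.1, ?_⟩
      rw [hD', Finset.mem_filter]
      exact ⟨Finset.mem_univ _, hp.2.2.1⟩
    calc T.card ≤ 2 * (T.image (fun p : Fin (t+1) × Fin 3 × Fin n => (p.1, p.2.2))).card := h
      _ ≤ 2 * (A ×ˢ D').card := Nat.mul_le_mul_left _ (Finset.card_le_card him)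
      _ = 2 * (A.card * D'.card) := by rw [Finset.card_product]
  have htot : Set.ncard {e | e ∈ G.edgeSet ∧ ∃ u v : Fin n, e = s(u, v) ∧
      (∃ i ∈ A, ∃ j, f i j = u) ∧ v ∈ Dset} ≤ 2 * (A.card * D'.card) := le_trans hS1 hTb
  have hcast : (Set.ncard {e | e ∈ G.edgeSet ∧ ∃ u v : Fin n, e = s(u, v) ∧
      (∃ i ∈ A, ∃ j, f i j = u) ∧ v ∈ Dset} : ℤ) ≤ 2 * (A.card : ℤ) * D'.card := by
    have := Nat.cast_le (α := ℤ) |>.mpr htot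
    push_cast at this
    linarith
  have hA0 : (0 : ℤ) ≤ 2 * (A.card : ℤ) := by positivity
  nlinarith [mul_le_mul_of_nonneg_left hDcard hA0]
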